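/- Let V be a finite-dimensional complex inner product space of dimension n with Hermitian inner product g. Define the (0,4)-tensor B by B(E,F,G,H) = g(E,F)g(G,H) + g(E,H)g(F,G), and for unit vectors X, Y and a unitary basis {e_1,...,e_n}, define Q(B)(X,X̄,Y,Ȳ) = Σ_{μ,ν} (|B_{Xμ̄νȲ}|² − |B_{Xμ̄Yν̄}|² + B_{XX̄νμ̄}B_{μν̄YȲ}) − Σ_μ Re(B_{Xμ̄}B_{μX̄YȲ} + B_{Yμ̄}B_{XX̄μȲ}), where B_{AB̄} denotes the trace g^{γδ̄}B_{AB̄γδ̄}. Then Q(B)(X,X̄,Y,Ȳ) = −(n+1)(|X|²|Y|² + |g(X̄,Y)|²), and in particular Q(B)(X,X̄,Y,Ȳ) ≤ 0. -/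
import Mathlib


open Complex Finset

/-- A complexified tangent vector of `ℂⁿ`: holomorphic and antiholomorphic components. -/
abbrev CVec (n : ℕ) := (Fin n → ℂ) × (Fin n → ℂ)

/-- The complex-bilinear extension of the Hermitian metric `g` to the complexified space. -/
noncomputable def gC {n : ℕ} (u v : CVec n) : ℂ := ∑ i, (u.1 i * v.2 i + u.2 i * v.1 i)

/-- The `(1,0)`-vector with components `x`. -/
def holC {n : ℕ} (x : Fin n → ℂ) : CVec n := (x, 0)

/-- Complex conjugation on the complexified space. -/
def barC {n : ℕ} (u : CVec n) : CVec n :=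
  (fun i => (starRingEnd ℂ) (u.2 i), fun i => (starRingEnd ℂ) (u.1 i))

/-- The unitary frame vector `e_μ`. -/
def eC {n : ℕ} (μ : Fin n) : CVec n := (fun i => if i = μ then 1 else 0, 0)

/-- The tensor `B(E,F,G,H) = g(E,F)g(G,H) + g(E,H)g(F,G)`. -/
noncomputable def BC {n : ℕ} (E F G H : CVec n) : ℂ := gC E F * gC G H + gC E H * gC F G

/-- The trace `B_{AB̄} = ∑_ν B(A, B̄, e_ν, ē_ν)`. -/
noncomputable def traceBC {n : ℕ} (A B : CVec n) : ℂ := ∑ ν, BC A B (eC ν) (barC (eC ν))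

/-- The quadratic form `Q(B)(X, X̄, Y, Ȳ)`. -/
noncomputable def QB {n : ℕ} (X Y : Fin n → ℂ) : ℂ :=
  (∑ μ, ∑ ν,
      ((Complex.normSq (BC (holC X) (barC (eC μ)) (eC ν) (barC (holC Y))) : ℂ)
        - (Complex.normSq (BC (holC X) (barC (eC μ)) (holC Y) (barC (eC ν))) : ℂ)
        + BC (holC X) (barC (holC X)) (eC ν) (barC (eC μ))
            * BC (eC μ) (barC (eC ν)) (holC Y) (barC (holC Y))))
    - ∑ μ,
      ((Complex.re
          (traceBC (holC X) (barC (eC μ)) * BC (eC μ) (barC (holC X)) (holC Y) (barC (holC Y))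
            + traceBC (holC Y) (barC (eC μ))
              * BC (holC X) (barC (holC X)) (eC μ) (barC (holC Y)))) : ℂ)

section
variable {n : ℕ} (X Y : Fin n → ℂ) (μ ν : Fin n)

lemma g1 : gC (holC X) (barC (eC μ)) = X μ := by
  simp [gC, holC, barC, eC, apply_ite]

lemma g2 : gC (eC ν) (barC (holC Y)) = (starRingEnd ℂ) (Y ν) := by
  simp [gC, holC, barC, eC, apply_ite]

lemma g3 : gC (eC μ) (barC (eC ν)) = if ν = μ then 1 else 0 := by
  simp [gC, holC, barC, eC, apply_ite]

lemma g4 : gC (holC X) (holC Y) = 0 := by simp [gC, holC]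

lemma g5 : gC (barC (eC μ)) (barC (holC Y)) = 0 := by simp [gC, holC, barC, eC]

lemma g6 : gC (barC (holC X)) (eC ν) = (starRingEnd ℂ) (X ν) := by
  simp [gC, holC, barC, eC, apply_ite]

lemma g7 : gC (barC (eC μ)) (holC Y) = Y μ := by
  simp [gC, holC, barC, eC, apply_ite]

lemma g8 : gC (barC (eC μ)) (eC ν) = if ν = μ then 1 else 0 := by
  simp [gC, holC, barC, eC, apply_ite]

lemma g9 : gC (holC X) (barC (holC Y)) = ∑ i, X i * (starRingEnd ℂ) (Y i) := by
  simp [gC, holC, barC]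

lemma g10 : gC (barC (holC X)) (holC Y) = ∑ i, (starRingEnd ℂ) (X i) * Y i := by
  simp [gC, holC, barC]

lemma g11 : gC (barC (eC μ)) (barC (eC ν)) = 0 := by simp [gC, barC, eC]

end
section
variable {n : ℕ} (X Y : Fin n → ℂ) (μ ν : Fin n)

lemma B1 : BC (holC X) (barC (eC μ)) (eC ν) (barC (holC Y))
    = X μ * (starRingEnd ℂ) (Y ν)
      + (if ν = μ then gC (holC X) (barC (holC Y)) else 0) := by
  simp [BC, g1, g2, g3, g8, mul_comm, mul_ite, ite_mul]

lemma B2 : BC (holC X) (barC (eC μ)) (holC Y) (barC (eC ν))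
    = X μ * Y ν + X ν * Y μ := by
  simp [BC, g1, g7]

lemma B3 : BC (holC X) (barC (holC X)) (eC ν) (barC (eC μ))
    = (if μ = ν then gC (holC X) (barC (holC X)) else 0)
      + X μ * (starRingEnd ℂ) (X ν) := by
  simp [BC, g1, g3, g6, mul_comm, mul_ite]

lemma B4 : BC (eC μ) (barC (eC ν)) (holC Y) (barC (holC Y))
    = (if ν = μ then gC (holC Y) (barC (holC Y)) else 0)
      + (starRingEnd ℂ) (Y μ) * Y ν := by
  simp [BC, g2, g3, g7, mul_comm, mul_ite]

lemma B5 : BC (eC μ) (barC (holC X)) (holC Y) (barC (holC Y))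
    = (starRingEnd ℂ) (X μ) * gC (holC Y) (barC (holC Y))
      + (starRingEnd ℂ) (Y μ) * gC (barC (holC X)) (holC Y) := by
  simp [BC, g2, g6, mul_comm]

lemma B6 : BC (holC X) (barC (holC X)) (eC μ) (barC (holC Y))
    = gC (holC X) (barC (holC X)) * (starRingEnd ℂ) (Y μ)
      + gC (holC X) (barC (holC Y)) * (starRingEnd ℂ) (X μ) := by
  simp [BC, g2, g6, mul_comm]

lemma B0 : BC (holC X) (barC (eC μ)) (eC ν) (barC (eC ν)) = X μ + (if ν = μ then X ν else 0) := by
  simp [BC, g1, g3, g8, mul_ite, ite_mul]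

lemma trace1 : traceBC (holC X) (barC (eC μ)) = ((n : ℂ) + 1) * X μ := by
  simp [traceBC, B0, Finset.sum_add_distrib, Finset.sum_ite_eq,
    Finset.sum_const, card_univ]
  ring

end
section
variable {n : ℕ}

lemma inner_helper (P Q : Fin n → ℂ) (a b : ℂ) (μ : Fin n) :
    ∑ ν, (P ν + if ν = μ then a else 0) * (Q ν + if ν = μ then b else 0)
      = (∑ ν, P ν * Q ν) + (P μ * b + a * Q μ + a * b) := by
  have h : ∀ ν, (P ν + if ν = μ then a else 0) * (Q ν + if ν = μ then b else 0)
      = P ν * Q ν + (if ν = μ then P ν * b + a * Q ν + a * b else 0) := by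
    intro ν
    by_cases hv : ν = μ
    · rw [if_pos hv, if_pos hv, if_pos hv]; ring
    · rw [if_neg hv, if_neg hv, if_neg hv]; ring
  rw [Finset.sum_congr rfl fun ν _ => h ν, Finset.sum_add_distrib,
    Finset.sum_ite_eq' Finset.univ μ]
  simp

lemma inner_helper2 (P Q : Fin n → ℂ) (a b : ℂ) (μ : Fin n) :
    ∑ ν, ((if μ = ν then a else 0) + P ν) * ((if ν = μ then b else 0) + Q ν)
      = (∑ ν, P ν * Q ν) + (a * Q μ + P μ * b + a * b) := by
  have h : ∀ ν, ((if μ = ν then a else 0) + P ν) * ((if ν = μ then b else 0) + Q ν)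
      = (P ν + if ν = μ then a else 0) * (Q ν + if ν = μ then b else 0) := by
    intro ν
    by_cases hv : ν = μ
    · subst hv; simp only [if_pos rfl]; ring
    · rw [if_neg fun h => hv h.symm, if_neg hv, if_neg hv]; ring
  rw [Finset.sum_congr rfl fun ν _ => h ν, inner_helper]; ring

variable (X Y : Fin n → ℂ)

lemma S1 : ∑ μ, ∑ ν, (BC (holC X) (barC (eC μ)) (eC ν) (barC (holC Y)))
      * (starRingEnd ℂ) (BC (holC X) (barC (eC μ)) (eC ν) (barC (holC Y)))
    = (∑ i, X i * (starRingEnd ℂ) (X i)) * (∑ i, Y i * (starRingEnd ℂ) (Y i))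
      + ((n : ℂ) + 2) * ((∑ i, X i * (starRingEnd ℂ) (Y i)) * (∑ i, (starRingEnd ℂ) (X i) * Y i)) := by
  set a := ∑ i, X i * (starRingEnd ℂ) (Y i) with ha
  set ca := ∑ i, (starRingEnd ℂ) (X i) * Y i with hca
  have hconj : (starRingEnd ℂ) a = ca := by simp [ha, hca, map_sum]
  simp only [B1, g9, ← ha, map_add, map_mul, apply_ite (starRingEnd ℂ), map_zero, hconj,
    Complex.conj_conj]
  rw [Finset.sum_congr rfl fun μ _ =>
    inner_helper (fun ν => X μ * (starRingEnd ℂ) (Y ν)) (fun ν => (starRingEnd ℂ) (X μ) * Y ν) a ca μ]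
  have hfac : ∀ μ : Fin n, ∑ ν, (X μ * (starRingEnd ℂ) (Y ν)) * ((starRingEnd ℂ) (X μ) * Y ν)
      = (X μ * (starRingEnd ℂ) (X μ)) * ∑ ν, Y ν * (starRingEnd ℂ) (Y ν) := by
    intro μ; rw [Finset.mul_sum]; exact Finset.sum_congr rfl fun ν _ => by ring
  rw [Finset.sum_congr rfl fun μ _ => by rw [hfac μ]]
  simp only [Finset.sum_add_distrib, ← Finset.sum_mul, ← Finset.mul_sum, Finset.sum_const,
    card_univ, Fintype.card_fin, nsmul_eq_mul, ← ha, ← hca]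
  ring

end
section
variable {n : ℕ} (X Y : Fin n → ℂ)

lemma S2 : ∑ μ, ∑ ν, (BC (holC X) (barC (eC μ)) (holC Y) (barC (eC ν)))
      * (starRingEnd ℂ) (BC (holC X) (barC (eC μ)) (holC Y) (barC (eC ν)))
    = 2 * ((∑ i, X i * (starRingEnd ℂ) (X i)) * (∑ i, Y i * (starRingEnd ℂ) (Y i)))
      + 2 * ((∑ i, X i * (starRingEnd ℂ) (Y i)) * (∑ i, (starRingEnd ℂ) (X i) * Y i)) := by
  simp only [B2, map_add, map_mul]
  have step : ∀ μ : Fin n, ∑ ν, (X μ * Y ν + X ν * Y μ)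
        * ((starRingEnd ℂ) (X μ) * (starRingEnd ℂ) (Y ν)
          + (starRingEnd ℂ) (X ν) * (starRingEnd ℂ) (Y μ))
      = (X μ * (starRingEnd ℂ) (X μ)) * (∑ ν, Y ν * (starRingEnd ℂ) (Y ν))
        + (X μ * (starRingEnd ℂ) (Y μ)) * (∑ ν, (starRingEnd ℂ) (X ν) * Y ν)
        + ((starRingEnd ℂ) (X μ) * Y μ) * (∑ ν, X ν * (starRingEnd ℂ) (Y ν))
        + (Y μ * (starRingEnd ℂ) (Y μ)) * (∑ ν, X ν * (starRingEnd ℂ) (X ν)) := by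
    intro μ
    simp only [Finset.mul_sum, ← Finset.sum_add_distrib]
    exact Finset.sum_congr rfl fun ν _ => by ring
  rw [Finset.sum_congr rfl fun μ _ => step μ]
  simp only [Finset.sum_add_distrib, ← Finset.sum_mul]
  ring

lemma S3 : ∑ μ, ∑ ν, BC (holC X) (barC (holC X)) (eC ν) (barC (eC μ))
      * BC (eC μ) (barC (eC ν)) (holC Y) (barC (holC Y))
    = ((n : ℂ) + 2) * ((∑ i, X i * (starRingEnd ℂ) (X i)) * (∑ i, Y i * (starRingEnd ℂ) (Y i)))
      + (∑ i, X i * (starRingEnd ℂ) (Y i)) * (∑ i, (starRingEnd ℂ) (X i) * Y i) := by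
  simp only [B3, B4]
  rw [Finset.sum_congr rfl fun μ _ => inner_helper2
    (fun ν => X μ * (starRingEnd ℂ) (X ν)) (fun ν => (starRingEnd ℂ) (Y μ) * Y ν)
    (gC (holC X) (barC (holC X))) (gC (holC Y) (barC (holC Y))) μ]
  have hfac : ∀ μ : Fin n, ∑ ν, (X μ * (starRingEnd ℂ) (X ν)) * ((starRingEnd ℂ) (Y μ) * Y ν)
      = (X μ * (starRingEnd ℂ) (Y μ)) * ∑ ν, (starRingEnd ℂ) (X ν) * Y ν := by
    intro μ; rw [Finset.mul_sum]; exact Finset.sum_congr rfl fun ν _ => by ring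
  rw [Finset.sum_congr rfl fun μ _ => by rw [hfac μ]]
  have gX : gC (holC X) (barC (holC X)) = ∑ i, X i * (starRingEnd ℂ) (X i) := g9 X X
  have gY : gC (holC Y) (barC (holC Y)) = ∑ i, Y i * (starRingEnd ℂ) (Y i) := g9 Y Y
  simp only [gX, gY, Finset.sum_add_distrib, ← Finset.sum_mul, ← Finset.mul_sum,
    Finset.sum_const, card_univ, Fintype.card_fin, nsmul_eq_mul]
  rw [show ∑ i, (starRingEnd ℂ) (Y i) * Y i = ∑ i, Y i * (starRingEnd ℂ) (Y i) from
    Finset.sum_congr rfl fun i _ => mul_comm _ _]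
  ring

lemma S4 : ∑ μ, (traceBC (holC X) (barC (eC μ)) * BC (eC μ) (barC (holC X)) (holC Y) (barC (holC Y))
      + traceBC (holC Y) (barC (eC μ)) * BC (holC X) (barC (holC X)) (eC μ) (barC (holC Y)))
    = 2 * ((n : ℂ) + 1) *
      ((∑ i, X i * (starRingEnd ℂ) (X i)) * (∑ i, Y i * (starRingEnd ℂ) (Y i))
        + (∑ i, X i * (starRingEnd ℂ) (Y i)) * (∑ i, (starRingEnd ℂ) (X i) * Y i)) := by
  simp only [trace1, B5, B6, g9, g10]
  have step : ∀ μ : Fin n,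
      ((n : ℂ) + 1) * X μ * ((starRingEnd ℂ) (X μ) * (∑ i, Y i * (starRingEnd ℂ) (Y i))
          + (starRingEnd ℂ) (Y μ) * ∑ i, (starRingEnd ℂ) (X i) * Y i)
        + ((n : ℂ) + 1) * Y μ * ((∑ i, X i * (starRingEnd ℂ) (X i)) * (starRingEnd ℂ) (Y μ)
          + (∑ i, X i * (starRingEnd ℂ) (Y i)) * (starRingEnd ℂ) (X μ))
      = ((X μ * (starRingEnd ℂ) (X μ)) * (∑ i, Y i * (starRingEnd ℂ) (Y i))
          + (X μ * (starRingEnd ℂ) (Y μ)) * (∑ i, (starRingEnd ℂ) (X i) * Y i)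
          + (Y μ * (starRingEnd ℂ) (Y μ)) * (∑ i, X i * (starRingEnd ℂ) (X i))
          + ((starRingEnd ℂ) (X μ) * Y μ) * (∑ i, X i * (starRingEnd ℂ) (Y i)))
        * ((n : ℂ) + 1) := by
    intro μ; ring
  rw [Finset.sum_congr rfl fun μ _ => step μ]
  simp only [← Finset.sum_mul, Finset.sum_add_distrib]
  ring

end
/-- `Q(B)(X,X̄,Y,Ȳ) = −(n+1)(|X|²|Y|² + |g(X̄,Y)|²) ≤ 0`. -/
theorem stmt0 (n : ℕ) (X Y : Fin n → ℂ) :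
    QB X Y =
      -((n : ℂ) + 1) *
        (((∑ i, Complex.normSq (X i)) * (∑ i, Complex.normSq (Y i)) : ℝ)
          + (Complex.normSq (gC (holC X) (barC (holC Y))) : ℝ))
    ∧ (QB X Y).re ≤ 0 := by
  have hx : ((∑ i, Complex.normSq (X i) : ℝ) : ℂ) = ∑ i, X i * (starRingEnd ℂ) (X i) := by
    rw [Complex.ofReal_sum]
    exact Finset.sum_congr rfl fun i _ => (Complex.mul_conj (X i)).symm
  have hy : ((∑ i, Complex.normSq (Y i) : ℝ) : ℂ) = ∑ i, Y i * (starRingEnd ℂ) (Y i) := by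
    rw [Complex.ofReal_sum]
    exact Finset.sum_congr rfl fun i _ => (Complex.mul_conj (Y i)).symm
  have haS : ((Complex.normSq (gC (holC X) (barC (holC Y))) : ℝ) : ℂ)
      = (∑ i, X i * (starRingEnd ℂ) (Y i)) * (∑ i, (starRingEnd ℂ) (X i) * Y i) := by
    rw [← Complex.mul_conj, g9]
    congr 1
    simp [map_sum, mul_comm]
  set t₁ : ℝ := (∑ i, Complex.normSq (X i)) * (∑ i, Complex.normSq (Y i)) with ht₁
  set t₂ : ℝ := Complex.normSq (gC (holC X) (barC (holC Y))) with ht₂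
  have hrC : ((t₁ + t₂ : ℝ) : ℂ)
      = (∑ i, X i * (starRingEnd ℂ) (X i)) * (∑ i, Y i * (starRingEnd ℂ) (Y i))
        + (∑ i, X i * (starRingEnd ℂ) (Y i)) * (∑ i, (starRingEnd ℂ) (X i) * Y i) := by
    rw [Complex.ofReal_add, ht₁, Complex.ofReal_mul, hx, hy, ht₂, haS]
  have key : QB X Y = -((n : ℂ) + 1) * ((t₁ + t₂ : ℝ) : ℂ) := by
    rw [QB]
    have h1 : (∑ μ, ∑ ν : Fin n,
        ((Complex.normSq (BC (holC X) (barC (eC μ)) (eC ν) (barC (holC Y))) : ℂ)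
          - (Complex.normSq (BC (holC X) (barC (eC μ)) (holC Y) (barC (eC ν))) : ℂ)
          + BC (holC X) (barC (holC X)) (eC ν) (barC (eC μ))
              * BC (eC μ) (barC (eC ν)) (holC Y) (barC (holC Y))))
        = ((n : ℂ) + 1) * ((t₁ + t₂ : ℝ) : ℂ) := by
      simp only [← Complex.mul_conj]
      simp only [Finset.sum_add_distrib, Finset.sum_sub_distrib]
      rw [S1, S2, S3, hrC]
      ring
    have h2 : (∑ μ, ((Complex.re
          (traceBC (holC X) (barC (eC μ)) * BC (eC μ) (barC (holC X)) (holC Y) (barC (holC Y))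
            + traceBC (holC Y) (barC (eC μ))
              * BC (holC X) (barC (holC X)) (eC μ) (barC (holC Y)))) : ℂ))
        = 2 * ((n : ℂ) + 1) * ((t₁ + t₂ : ℝ) : ℂ) := by
      have h4' : (∑ μ, (traceBC (holC X) (barC (eC μ))
            * BC (eC μ) (barC (holC X)) (holC Y) (barC (holC Y))
          + traceBC (holC Y) (barC (eC μ))
            * BC (holC X) (barC (holC X)) (eC μ) (barC (holC Y))))
          = ((2 * ((n : ℝ) + 1) * (t₁ + t₂) : ℝ) : ℂ) := by
        rw [S4, ← hrC]; push_cast; ring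
      calc ∑ μ, ((Complex.re
          (traceBC (holC X) (barC (eC μ)) * BC (eC μ) (barC (holC X)) (holC Y) (barC (holC Y))
            + traceBC (holC Y) (barC (eC μ))
              * BC (holC X) (barC (holC X)) (eC μ) (barC (holC Y)))) : ℂ)
          = ((∑ μ, Complex.re
              (traceBC (holC X) (barC (eC μ)) * BC (eC μ) (barC (holC X)) (holC Y) (barC (holC Y))
                + traceBC (holC Y) (barC (eC μ))
                  * BC (holC X) (barC (holC X)) (eC μ) (barC (holC Y))) : ℝ) : ℂ) :=
            (Complex.ofReal_sum _ _).symm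
        _ = (((∑ μ, (traceBC (holC X) (barC (eC μ))
              * BC (eC μ) (barC (holC X)) (holC Y) (barC (holC Y))
            + traceBC (holC Y) (barC (eC μ))
              * BC (holC X) (barC (holC X)) (eC μ) (barC (holC Y)))).re : ℝ) : ℂ) := by
            rw [Complex.re_sum]
        _ = 2 * ((n : ℂ) + 1) * ((t₁ + t₂ : ℝ) : ℂ) := by
            rw [h4', Complex.ofReal_re]; push_cast; ring
    rw [h1, h2]
    ring
  refine ⟨by rw [key, Complex.ofReal_add], ?_⟩
  rw [key]
  have h1 : -((n : ℂ) + 1) * ((t₁ + t₂ : ℝ) : ℂ) = ((-((n : ℝ) + 1) * (t₁ + t₂) : ℝ) : ℂ) := by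
    push_cast; ring
  rw [h1, Complex.ofReal_re]
  have ht₁0 : 0 ≤ t₁ := mul_nonneg (Finset.sum_nonneg fun i _ => Complex.normSq_nonneg _)
    (Finset.sum_nonneg fun i _ => Complex.normSq_nonneg _)
  have ht₂0 : 0 ≤ t₂ := Complex.normSq_nonneg _
  have : (0:ℝ) ≤ (n : ℝ) + 1 := by positivity
  nlinarith
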